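/- Let G be a group, A an element of G, and B an element satisfying B A B^{-1} = A^{-1} and B^2 central (e.g. B^2 = -I in SU(2)). Let u, v be positive words in {a,b}* with the same letter counts (m, n), and define for each j the prefix counts A_u(j), A_v(j) of a's before the j-th b. Then w = u^{-1}v evaluates as w(A,B) = A^{(-1)^n · 2Δ_0}, where Δ_0 = Σ_{j=1}^{n} (-1)^{j-1}(A_v(j) - A_u(j)). In particular, if A = diag(e^{iθ}, e^{-iθ}) ∈ SU(2), then tr(w(A,B)) = 2cos(2Δ_0 θ), and if Δ_0 ≠ 0 then θ = π/(4|Δ_0|) yields tr(w(A,B)) = 0. -/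

import Mathlib

/-- The special unitary group `SU(2)` as a subgroup of the `2 × 2` unitary group. -/
def SU2 : Subgroup (Matrix.unitaryGroup (Fin 2) ℂ) where
  carrier := {A | (A : Matrix (Fin 2) (Fin 2) ℂ).det = 1}
  one_mem' := by simp
  mul_mem' := by
    intro A B hA hB
    simp only [Set.mem_setOf_eq] at *
    rw [Matrix.UnitaryGroup.mul_val, Matrix.det_mul, hA, hB, one_mul]
  inv_mem' := by
    intro A hA
    simp only [Set.mem_setOf_eq] at *
    rw [Matrix.UnitaryGroup.inv_val]
    simp [Matrix.det_conjTranspose, star, hA]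
    rfl

/-- The underlying `2 × 2` complex matrix of an element of `SU(2)`. -/
def SU2.mat (A : SU2) : Matrix (Fin 2) (Fin 2) ℂ := A.val.val

/-- Positive words: `true` is the letter `a`, `false` is the letter `b`. -/
abbrev PosWord := List Bool

/-- Evaluation of a positive word, substituting `A` for `a` and `B` for `b`. -/
def evalPos {G : Type*} [Group G] (A B : G) (x : PosWord) : G :=
  (x.map (fun c => if c then A else B)).prod

/-- `prefixCountA x j` is `A_x(j)`: the number of `a`'s before the `j`-th `b` in `x`. -/
def prefixCountA : PosWord → ℕ → ℕ
  | [], _ => 0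
  | (true :: xs), j => if j = 0 then 0 else 1 + prefixCountA xs j
  | (false :: xs), j => if j ≤ 1 then 0 else prefixCountA xs (j - 1)

/-- The alternating row-prefix invariant `Δ₀ = Σ_{j=1}^n (-1)^{j-1}(A_v(j) - A_u(j))`. -/
def delta0 (u v : PosWord) : ℤ :=
  ∑ j ∈ Finset.range (u.count false),
    (-1 : ℤ) ^ j * ((prefixCountA v (j + 1) : ℤ) - (prefixCountA u (j + 1) : ℤ))

/- ===== auxiliary material ===== -/

def nu : PosWord → ℤ
  | [] => 0
  | true :: xs => 1 + nu xs
  | false :: xs => - nu xs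

lemma nu_eq (x : PosWord) :
    nu x = 2 * ∑ j ∈ Finset.range (x.count false),
        (-1 : ℤ) ^ j * (prefixCountA x (j + 1) : ℤ)
      + (-1 : ℤ) ^ (x.count false) * (x.count true : ℤ) := by
  induction x with
  | nil => simp [nu, prefixCountA]
  | cons c xs ih =>
    cases c with
    | true =>
      have hpc : ∀ j : ℕ, prefixCountA (true :: xs) (j + 1) = 1 + prefixCountA xs (j + 1) := by
        intro j; simp [prefixCountA]
      have hcf : (true :: xs).count false = xs.count false := by simp
      have hct : ((true :: xs).count true : ℤ) = (xs.count true : ℤ) + 1 := by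
        simp [List.count_cons]
      rw [show nu (true :: xs) = 1 + nu xs from rfl, ih, hcf, hct]
      have hsum : ∑ j ∈ Finset.range (xs.count false),
          (-1 : ℤ) ^ j * (prefixCountA (true :: xs) (j + 1) : ℤ)
        = (∑ j ∈ Finset.range (xs.count false), (-1 : ℤ) ^ j)
          + ∑ j ∈ Finset.range (xs.count false),
              (-1 : ℤ) ^ j * (prefixCountA xs (j + 1) : ℤ) := by
        rw [← Finset.sum_add_distrib]
        refine Finset.sum_congr rfl fun j _ => ?_
        rw [hpc j]; push_cast; ring
      rw [hsum, neg_one_geom_sum]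
      rcases Nat.even_or_odd (xs.count false) with h | h
      · rw [if_pos h, h.neg_one_pow]; ring
      · rw [if_neg (Nat.not_even_iff_odd.mpr h), h.neg_one_pow]; ring
    | false =>
      have hcf : (false :: xs).count false = xs.count false + 1 := by
        simp [List.count_cons]
      have hct : (false :: xs).count true = xs.count true := by simp
      rw [show nu (false :: xs) = - nu xs from rfl, ih, hcf, hct]
      rw [Finset.sum_range_succ']
      have h0 : (-1 : ℤ) ^ 0 * (prefixCountA (false :: xs) (0 + 1) : ℤ) = 0 := by
        simp [prefixCountA]
      have hj : ∀ j : ℕ, (-1 : ℤ) ^ (j + 1) * (prefixCountA (false :: xs) (j + 1 + 1) : ℤ)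
          = -((-1 : ℤ) ^ j * (prefixCountA xs (j + 1) : ℤ)) := by
        intro j
        have : prefixCountA (false :: xs) (j + 2) = prefixCountA xs (j + 1) := by
          simp [prefixCountA]
        rw [show j + 1 + 1 = j + 2 from rfl, this, pow_succ]; ring
      rw [h0, add_zero]
      rw [Finset.sum_congr rfl fun j _ => hj j, Finset.sum_neg_distrib]
      rw [pow_succ]; ring

section GroupPart
variable {G : Type*} [Group G] {A B : G} (hBA : B * A * B⁻¹ = A⁻¹)

include hBA

lemma conj_zpow' (k : ℤ) : B * A ^ k = A ^ (-k) * B := by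
  have h : B * A ^ k * B⁻¹ = A ^ (-k) := by
    have := map_zpow (MulAut.conj B) A k
    simp only [MulAut.conj_apply] at this
    rw [this, hBA, inv_zpow, ← zpow_neg]
  rw [← h]; group

lemma conj_pow_B (n : ℕ) (k : ℤ) :
    (B ^ n)⁻¹ * A ^ k * B ^ n = A ^ ((-1 : ℤ) ^ n * k) := by
  induction n generalizing k with
  | zero => simp
  | succ n ih =>
    have hstep : B⁻¹ * A ^ k * B = A ^ (-k) := by
      have h := conj_zpow' hBA (-k)
      rw [neg_neg] at h
      calc B⁻¹ * A ^ k * B = B⁻¹ * (B * A ^ (-k)) := by rw [h]; group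
        _ = A ^ (-k) := by group
    calc (B ^ (n+1))⁻¹ * A ^ k * B ^ (n+1)
        = (B ^ n)⁻¹ * (B⁻¹ * A ^ k * B) * B ^ n := by
          rw [pow_succ]; group
      _ = (B ^ n)⁻¹ * A ^ (-k) * B ^ n := by rw [hstep]
      _ = A ^ ((-1:ℤ)^n * (-k)) := ih (-k)
      _ = A ^ ((-1:ℤ)^(n+1) * k) := by rw [pow_succ]; ring_nf

lemma evalPos_eq (x : PosWord) :
    evalPos A B x = A ^ (nu x) * B ^ (x.count false) := by
  induction x with
  | nil => simp [evalPos, nu]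
  | cons c xs ih =>
    cases c with
    | true =>
      have : evalPos A B (true :: xs) = A * evalPos A B xs := by simp [evalPos]
      rw [this, ih, show nu (true :: xs) = 1 + nu xs from rfl]
      rw [show (true :: xs).count false = xs.count false by simp]
      rw [← mul_assoc, ← zpow_one_add]
    | false =>
      have : evalPos A B (false :: xs) = B * evalPos A B xs := by simp [evalPos]
      rw [this, ih, show nu (false :: xs) = - nu xs from rfl,
        show (false :: xs).count false = xs.count false + 1 by simp [List.count_cons],
        ← mul_assoc, conj_zpow' hBA, pow_succ]
      group

lemma part1 (u v : PosWord) (hb : u.count false = v.count false) :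
    (evalPos A B u)⁻¹ * evalPos A B v
      = A ^ ((-1 : ℤ) ^ (u.count false) * (nu v - nu u)) := by
  rw [evalPos_eq hBA u, evalPos_eq hBA v, ← hb]
  calc (A ^ nu u * B ^ u.count false)⁻¹ * (A ^ nu v * B ^ u.count false)
      = (B ^ u.count false)⁻¹ * A ^ (nu v - nu u) * B ^ u.count false := by
        rw [zpow_sub]; group
    _ = A ^ ((-1 : ℤ) ^ (u.count false) * (nu v - nu u)) := conj_pow_B hBA _ _

end GroupPart

lemma nu_sub_eq (u v : PosWord)
    (ha : u.count true = v.count true) (hb : u.count false = v.count false) :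
    nu v - nu u = 2 * delta0 u v := by
  rw [nu_eq u, nu_eq v, delta0, ← ha, ← hb]
  rw [show (∑ j ∈ Finset.range (u.count false),
      (-1 : ℤ) ^ j * ((prefixCountA v (j + 1) : ℤ) - (prefixCountA u (j + 1) : ℤ)))
    = (∑ j ∈ Finset.range (u.count false), (-1 : ℤ) ^ j * (prefixCountA v (j + 1) : ℤ))
      - ∑ j ∈ Finset.range (u.count false), (-1 : ℤ) ^ j * (prefixCountA u (j + 1) : ℤ) by
    rw [← Finset.sum_sub_distrib]
    exact Finset.sum_congr rfl fun j _ => by ring]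
  ring

lemma SU2.mat_mul (x y : SU2) : SU2.mat (x * y) = SU2.mat x * SU2.mat y := rfl
lemma SU2.mat_one : SU2.mat 1 = 1 := rfl
lemma SU2.mat_inv (x : SU2) : SU2.mat x⁻¹ = star (SU2.mat x) := rfl

noncomputable def Dmat (t : ℝ) : Matrix (Fin 2) (Fin 2) ℂ :=
  Matrix.diagonal ![Complex.exp (t * Complex.I), Complex.exp (-t * Complex.I)]

lemma Dmat_mul (s t : ℝ) : Dmat s * Dmat t = Dmat (s + t) := by
  rw [Dmat, Dmat, Dmat, Matrix.diagonal_mul_diagonal]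
  apply congrArg Matrix.diagonal
  funext i
  fin_cases i <;> simp [← Complex.exp_add] <;> congr 1 <;> push_cast <;> ring

lemma Dmat_zero : Dmat 0 = 1 := by
  rw [Dmat, show (1 : Matrix (Fin 2) (Fin 2) ℂ)
      = Matrix.diagonal (fun _ => 1) from (Matrix.diagonal_one).symm]
  apply congrArg Matrix.diagonal
  funext i
  fin_cases i <;> simp

lemma Dmat_conjT (t : ℝ) : star (Dmat t) = Dmat (-t) := by
  rw [Matrix.star_eq_conjTranspose, Dmat, Dmat, Matrix.diagonal_conjTranspose]
  apply congrArg Matrix.diagonal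
  funext i
  fin_cases i <;>
    simp [Pi.star_def, ← Complex.exp_conj, map_mul, Complex.conj_I, Complex.conj_ofReal] <;>
    congr 1 <;> push_cast <;> ring

lemma mat_zpow (A : SU2) (θ : ℝ) (hA : SU2.mat A = Dmat θ) (k : ℤ) :
    SU2.mat (A ^ k) = Dmat (k * θ) := by
  induction k using Int.induction_on with
  | zero => simp [SU2.mat_one, Dmat_zero]
  | succ n ih =>
    rw [zpow_add_one, SU2.mat_mul, ih, hA, Dmat_mul]
    apply congrArg Dmat; push_cast; ring
  | pred n ih =>
    rw [zpow_sub_one, SU2.mat_mul, ih, SU2.mat_inv, hA, Dmat_conjT, Dmat_mul]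
    apply congrArg Dmat; push_cast; ring

lemma trace_Dmat (t : ℝ) : Matrix.trace (Dmat t) = 2 * Real.cos t := by
  rw [Dmat, Matrix.trace_diagonal, Fin.sum_univ_two]
  simp only [Matrix.cons_val_zero, Matrix.cons_val_one, Matrix.head_cons]
  rw [← Complex.two_cos, Complex.ofReal_cos]


/-- if `B A B⁻¹ = A⁻¹` and `B²` is central, then for positive words
`u, v` with equal letter counts, `w = u⁻¹v` evaluates as `A^{(-1)^n · 2Δ₀}`; and in
`SU(2)` with `A = diag(e^{iθ}, e^{-iθ})` one gets `tr(w(A,B)) = 2cos(2Δ₀θ)`, which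
vanishes for `θ = π/(4|Δ₀|)` whenever `Δ₀ ≠ 0`. -/
theorem dihedral_point_trace (u v : PosWord)
    (ha : u.count true = v.count true) (hb : u.count false = v.count false) :
    (∀ (G : Type*) (_ : Group G) (A B : G), B * A * B⁻¹ = A⁻¹ →
      (∀ g : G, B ^ 2 * g = g * B ^ 2) →
      (evalPos A B u)⁻¹ * evalPos A B v
        = A ^ ((-1 : ℤ) ^ (u.count false) * (2 * delta0 u v))) ∧
    (∀ (A B : SU2) (θ : ℝ), B * A * B⁻¹ = A⁻¹ →
      (∀ g : SU2, B ^ 2 * g = g * B ^ 2) →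
      SU2.mat A
        = Matrix.diagonal ![Complex.exp (θ * Complex.I), Complex.exp (-θ * Complex.I)] →
      Matrix.trace (SU2.mat ((evalPos A B u)⁻¹ * evalPos A B v))
          = 2 * Real.cos (2 * (delta0 u v : ℝ) * θ) ∧
        (delta0 u v ≠ 0 → θ = Real.pi / (4 * |(delta0 u v : ℤ)|) →
          Matrix.trace (SU2.mat ((evalPos A B u)⁻¹ * evalPos A B v)) = 0)) := by
  constructor
  · intro G inst A B hBA _
    letI := inst
    rw [part1 hBA u v hb, nu_sub_eq u v ha hb]
  · intro A B θ hBA _ hA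
    have hA' : SU2.mat A = Dmat θ := hA
    have hw : (evalPos A B u)⁻¹ * evalPos A B v
        = A ^ ((-1 : ℤ) ^ (u.count false) * (2 * delta0 u v)) := by
      rw [part1 hBA u v hb, nu_sub_eq u v ha hb]
    have hmat : SU2.mat ((evalPos A B u)⁻¹ * evalPos A B v)
        = Dmat ((((-1 : ℤ) ^ (u.count false) * (2 * delta0 u v) : ℤ) : ℝ) * θ) := by
      rw [hw]; exact mat_zpow A θ hA' _
    have hcos : Real.cos ((((-1 : ℤ) ^ (u.count false) * (2 * delta0 u v) : ℤ) : ℝ) * θ)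
        = Real.cos (2 * (delta0 u v : ℝ) * θ) := by
      rcases Nat.even_or_odd (u.count false) with h | h
      · have h1 : (((-1 : ℤ) ^ (u.count false) * (2 * delta0 u v) : ℤ) : ℝ)
            = 2 * (delta0 u v : ℝ) := by
          push_cast [h.neg_one_pow]; ring
        rw [h1]
      · have h1 : (((-1 : ℤ) ^ (u.count false) * (2 * delta0 u v) : ℤ) : ℝ)
            = -(2 * (delta0 u v : ℝ)) := by
          push_cast [h.neg_one_pow]; ring
        rw [h1, show -(2 * (delta0 u v : ℝ)) * θ = -(2 * (delta0 u v : ℝ) * θ) by ring,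
          Real.cos_neg]
    have htr : Matrix.trace (SU2.mat ((evalPos A B u)⁻¹ * evalPos A B v))
        = 2 * Real.cos (2 * (delta0 u v : ℝ) * θ) := by
      rw [hmat, trace_Dmat, hcos]
    refine ⟨htr, fun hd hθ => ?_⟩
    rw [htr]
    have hdne : (delta0 u v : ℝ) ≠ 0 := Int.cast_ne_zero.mpr hd
    rcases lt_trichotomy (delta0 u v) 0 with hlt | heq | hgt
    · have habs : ((|delta0 u v| : ℤ) : ℝ) = -(delta0 u v : ℝ) := by
        rw [abs_of_neg hlt]; push_cast; ring
      have h2 : 2 * (delta0 u v : ℝ) * θ = -(Real.pi / 2) := by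
        rw [hθ, habs]; field_simp; ring
      rw [h2, Real.cos_neg, Real.cos_pi_div_two]
      norm_num
    · exact absurd heq hd
    · have habs : ((|delta0 u v| : ℤ) : ℝ) = (delta0 u v : ℝ) := by
        rw [abs_of_pos hgt]
      have h2 : 2 * (delta0 u v : ℝ) * θ = Real.pi / 2 := by
        rw [hθ, habs]; field_simp; ring
      rw [h2, Real.cos_pi_div_two]
      norm_num
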